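/- For any stationary finite Markov chains 𝒳 and 𝒴 and any cost matrix C: X×Y → ℝ₊, one has d_OTC(𝒳,𝒴;C) = lim_{δ→0⁺} d_WL^{δ,(∞)}(𝒳,𝒴;C). -/

import Mathlib

open scoped BigOperators
open Filter Topology

/-- A probability vector on a finite type. -/
def IsProb {X : Type*} [Fintype X] (ν : X → ℝ) : Prop :=
  (∀ x, 0 ≤ ν x) ∧ ∑ x, ν x = 1

/-- `μ` is a coupling of `α` and `β`. -/
def IsCoupling {X Y : Type*} [Fintype X] [Fintype Y]
    (μ : X × Y → ℝ) (α : X → ℝ) (β : Y → ℝ) : Prop :=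
  (∀ z, 0 ≤ μ z) ∧ (∀ x, ∑ y, μ (x, y) = α x) ∧ (∀ y, ∑ x, μ (x, y) = β y)

/-- A finite Markov chain: a transition kernel together with an initial distribution. -/
structure MarkovChain (X : Type*) [Fintype X] where
  kernel : X → X → ℝ
  init : X → ℝ
  kernel_prob : ∀ x, IsProb (kernel x)
  init_prob : IsProb init

/-- A Markovian coupling between two finite Markov chains.  `trans t` is the
transition coupling used from time `t` to time `t+1` (i.e. `m^{(t+1)}`). -/
structure MarkovCoupling {X Y : Type*} [Fintype X] [Fintype Y]
    (MX : MarkovChain X) (MY : MarkovChain Y) where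
  init : X × Y → ℝ
  trans : ℕ → X × Y → X × Y → ℝ
  init_coupling : IsCoupling init MX.init MY.init
  trans_coupling : ∀ t xy, IsCoupling (trans t xy) (MX.kernel xy.1) (MY.kernel xy.2)

/-- Time-`t` law determined by an initial distribution and step kernels. -/
noncomputable def lawAux {X Y : Type*} [Fintype X] [Fintype Y]
    (ν : X × Y → ℝ) (m : ℕ → X × Y → X × Y → ℝ) : ℕ → X × Y → ℝ
  | 0 => ν
  | t + 1 => fun z => ∑ w : X × Y, m t w z * lawAux ν m t w

/-- The time-`t` law of a Markovian coupling. -/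
noncomputable def MarkovCoupling.law {X Y : Type*} [Fintype X] [Fintype Y]
    {MX : MarkovChain X} {MY : MarkovChain Y} (π : MarkovCoupling MX MY) :
    ℕ → X × Y → ℝ :=
  lawAux π.init π.trans

/-- `p` is a probability distribution on `ℕ`. -/
def IsProbNat (p : ℕ → ℝ) : Prop := (∀ t, 0 ≤ p t) ∧ HasSum p 1

/-- The Optimal Transport Markov (OTM) distance associated to `p`. -/
noncomputable def dOTM {X Y : Type*} [Fintype X] [Fintype Y] (p : ℕ → ℝ)
    (MX : MarkovChain X) (MY : MarkovChain Y) (C : X × Y → ℝ) : ℝ :=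
  ⨅ π : MarkovCoupling MX MY, ∑' t, p t * ∑ z : X × Y, C z * π.law t z

/-- A Markovian coupling is time homogeneous if its transition couplings do not
depend on the time index. -/
def IsTimeHomogeneous {X Y : Type*} [Fintype X] [Fintype Y]
    {MX : MarkovChain X} {MY : MarkovChain Y} (π : MarkovCoupling MX MY) : Prop :=
  ∀ t, π.trans t = π.trans 0

/-- The initial coupling is stationary for the coupled transition kernel. -/
def HasStationaryInit {X Y : Type*} [Fintype X] [Fintype Y]
    {MX : MarkovChain X} {MY : MarkovChain Y} (π : MarkovCoupling MX MY) : Prop :=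
  ∀ z' : X × Y, ∑ z : X × Y, π.trans 0 z z' * π.init z = π.init z'

/-- A Markov chain is stationary if its initial distribution is stationary for its kernel. -/
def IsStationaryMC {X : Type*} [Fintype X] (M : MarkovChain X) : Prop :=
  ∀ x', ∑ x, M.kernel x x' * M.init x = M.init x'

/-- The optimal transition coupling (OTC) distance. -/
noncomputable def dOTC {X Y : Type*} [Fintype X] [Fintype Y]
    (MX : MarkovChain X) (MY : MarkovChain Y) (C : X × Y → ℝ) : ℝ :=
  ⨅ π : {π : MarkovCoupling MX MY // IsTimeHomogeneous π ∧ HasStationaryInit π},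
    ∑ z : X × Y, C z * π.1.init z

/-- The geometric distribution `p_δ^∞` on `ℕ`. -/
noncomputable def pGeom (δ : ℝ) : ℕ → ℝ := fun t => δ * (1 - δ) ^ t

/-- The truncation `p_δ^k` of the geometric distribution at `k`. -/
noncomputable def pTrunc (δ : ℝ) (k : ℕ) : ℕ → ℝ := fun t =>
  if t < k then δ * (1 - δ) ^ t else if t = k then (1 - δ) ^ k else 0


section Aux

variable {X Y : Type*} [Fintype X] [Fintype Y] {MX : MarkovChain X} {MY : MarkovChain Y}

lemma entry_le_one {σ : Type*} [Fintype σ] {f : σ → ℝ} (h0 : ∀ a, 0 ≤ f a)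
    (h1 : ∑ a, f a = 1) (a : σ) : f a ≤ 1 := by
  calc f a ≤ ∑ b, f b := Finset.single_le_sum (fun b _ => h0 b) (Finset.mem_univ a)
    _ = 1 := h1

lemma IsCoupling.sum_eq_one {μ : X × Y → ℝ} {α : X → ℝ} {β : Y → ℝ} (h : IsCoupling μ α β)
    (hα : ∑ x, α x = 1) : ∑ z : X × Y, μ z = 1 := by
  rw [Fintype.sum_prod_type]
  simp_rw [h.2.1]
  exact hα

lemma IsCoupling.le_one {μ : X × Y → ℝ} {α : X → ℝ} {β : Y → ℝ} (h : IsCoupling μ α β)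
    (hα : ∑ x, α x = 1) (z : X × Y) : μ z ≤ 1 :=
  entry_le_one h.1 (h.sum_eq_one hα) z

lemma law_zero (π : MarkovCoupling MX MY) : π.law 0 = π.init := rfl

lemma law_succ (π : MarkovCoupling MX MY) (t : ℕ) (z : X × Y) :
    π.law (t + 1) z = ∑ w : X × Y, π.trans t w z * π.law t w := rfl

lemma law_nonneg (π : MarkovCoupling MX MY) : ∀ t z, 0 ≤ π.law t z
  | 0, z => π.init_coupling.1 z
  | t+1, z => Finset.sum_nonneg fun w _ =>
      mul_nonneg ((π.trans_coupling t w).1 z) (law_nonneg π t w)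

lemma law_margX (hMX : IsStationaryMC MX) (π : MarkovCoupling MX MY) :
    ∀ t x, ∑ y, π.law t (x, y) = MX.init x := by
  intro t
  induction t with
  | zero => exact fun x => π.init_coupling.2.1 x
  | succ t ih =>
    intro x
    have key : ∀ w : X × Y, ∑ y, π.trans t w (x, y) * π.law t w
        = MX.kernel w.1 x * π.law t w := by
      intro w
      rw [← Finset.sum_mul, (π.trans_coupling t w).2.1 x]
    calc ∑ y, π.law (t+1) (x, y)
        = ∑ y, ∑ w : X × Y, π.trans t w (x, y) * π.law t w := rfl
      _ = ∑ w : X × Y, ∑ y, π.trans t w (x, y) * π.law t w := Finset.sum_comm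
      _ = ∑ w : X × Y, MX.kernel w.1 x * π.law t w :=
          Finset.sum_congr rfl fun w _ => key w
      _ = ∑ x0, ∑ y0, MX.kernel x0 x * π.law t (x0, y0) := by rw [Fintype.sum_prod_type]
      _ = ∑ x0, MX.kernel x0 x * ∑ y0, π.law t (x0, y0) := by simp_rw [Finset.mul_sum]
      _ = ∑ x0, MX.kernel x0 x * MX.init x0 := by simp_rw [ih]
      _ = MX.init x := hMX x

lemma law_margY (hMY : IsStationaryMC MY) (π : MarkovCoupling MX MY) :
    ∀ t y, ∑ x, π.law t (x, y) = MY.init y := by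
  intro t
  induction t with
  | zero => exact fun y => π.init_coupling.2.2 y
  | succ t ih =>
    intro y
    have key : ∀ w : X × Y, ∑ x, π.trans t w (x, y) * π.law t w
        = MY.kernel w.2 y * π.law t w := by
      intro w
      rw [← Finset.sum_mul, (π.trans_coupling t w).2.2 y]
    calc ∑ x, π.law (t+1) (x, y)
        = ∑ x, ∑ w : X × Y, π.trans t w (x, y) * π.law t w := rfl
      _ = ∑ w : X × Y, ∑ x, π.trans t w (x, y) * π.law t w := Finset.sum_comm
      _ = ∑ w : X × Y, MY.kernel w.2 y * π.law t w :=
          Finset.sum_congr rfl fun w _ => key w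
      _ = ∑ x0, ∑ y0, MY.kernel y0 y * π.law t (x0, y0) := by rw [Fintype.sum_prod_type]
      _ = ∑ y0, ∑ x0, MY.kernel y0 y * π.law t (x0, y0) := Finset.sum_comm
      _ = ∑ y0, MY.kernel y0 y * ∑ x0, π.law t (x0, y0) := by simp_rw [Finset.mul_sum]
      _ = ∑ y0, MY.kernel y0 y * MY.init y0 := by simp_rw [ih]
      _ = MY.init y := hMY y

lemma law_sum_one (hMX : IsStationaryMC MX) (π : MarkovCoupling MX MY) (t : ℕ) :
    ∑ z : X × Y, π.law t z = 1 := by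
  rw [Fintype.sum_prod_type]
  simp_rw [law_margX hMX π t]
  exact MX.init_prob.2

lemma law_le_one (hMX : IsStationaryMC MX) (π : MarkovCoupling MX MY) (t : ℕ) (z : X × Y) :
    π.law t z ≤ 1 :=
  entry_le_one (law_nonneg π t) (law_sum_one hMX π t) z

lemma trans_le_one (π : MarkovCoupling MX MY) (t : ℕ) (z z' : X × Y) :
    π.trans t z z' ≤ 1 :=
  (π.trans_coupling t z).le_one (MX.kernel_prob z.1).2 z'

lemma isCoupling_prod {α : X → ℝ} {β : Y → ℝ} (hα : IsProb α) (hβ : IsProb β) :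
    IsCoupling (fun z : X × Y => α z.1 * β z.2) α β :=
  ⟨fun z => mul_nonneg (hα.1 z.1) (hβ.1 z.2),
   fun x => by simp only [← Finset.mul_sum, hβ.2, mul_one],
   fun y => by simp only [← Finset.sum_mul, hα.2, one_mul]⟩

noncomputable def prodCoupling (MX : MarkovChain X) (MY : MarkovChain Y) :
    MarkovCoupling MX MY where
  init := fun z => MX.init z.1 * MY.init z.2
  trans := fun _ z w => MX.kernel z.1 w.1 * MY.kernel z.2 w.2
  init_coupling := isCoupling_prod MX.init_prob MY.init_prob
  trans_coupling := fun _ z => isCoupling_prod (MX.kernel_prob z.1) (MY.kernel_prob z.2)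

instance instNonemptyMarkovCoupling : Nonempty (MarkovCoupling MX MY) :=
  ⟨prodCoupling MX MY⟩

end Aux

section Main
variable {X Y : Type*} [Fintype X] [Fintype Y] {MX : MarkovChain X} {MY : MarkovChain Y}

lemma prod_admissible (hMX : IsStationaryMC MX) (hMY : IsStationaryMC MY) :
    IsTimeHomogeneous (prodCoupling MX MY) ∧ HasStationaryInit (prodCoupling MX MY) := by
  refine ⟨fun t => rfl, fun z' => ?_⟩
  show ∑ z : X × Y, (MX.kernel z.1 z'.1 * MY.kernel z.2 z'.2) * (MX.init z.1 * MY.init z.2)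
      = MX.init z'.1 * MY.init z'.2
  rw [Fintype.sum_prod_type]
  have h : ∀ x y, (MX.kernel x z'.1 * MY.kernel y z'.2) * (MX.init x * MY.init y)
      = (MX.kernel x z'.1 * MX.init x) * (MY.kernel y z'.2 * MY.init y) := fun x y => by ring
  simp_rw [h, ← Finset.mul_sum, ← Finset.sum_mul, hMX z'.1, hMY z'.2]

lemma nonempty_adm (hMX : IsStationaryMC MX) (hMY : IsStationaryMC MY) :
    Nonempty {π : MarkovCoupling MX MY // IsTimeHomogeneous π ∧ HasStationaryInit π} :=
  ⟨⟨prodCoupling MX MY, prod_admissible hMX hMY⟩⟩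

lemma pGeom_nonneg {δ : ℝ} (h0 : 0 < δ) (h1 : δ ≤ 1) (t : ℕ) : 0 ≤ pGeom δ t :=
  mul_nonneg h0.le (pow_nonneg (by linarith) t)

lemma summable_pGeom {δ : ℝ} (h0 : 0 < δ) (h1 : δ < 1) : Summable (pGeom δ) :=
  (summable_geometric_of_lt_one (by linarith) (by linarith)).mul_left δ

lemma tsum_pGeom {δ : ℝ} (h0 : 0 < δ) (h1 : δ < 1) : ∑' t, pGeom δ t = 1 := by
  unfold pGeom
  rw [tsum_mul_left, tsum_geometric_of_lt_one (by linarith) (by linarith),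
    show (1 - (1 - δ)) = δ by ring, mul_inv_cancel₀ h0.ne']

lemma otm_cost_nonneg {C : X × Y → ℝ} (hC : ∀ z, 0 ≤ C z) {δ : ℝ} (h0 : 0 < δ) (h1 : δ ≤ 1)
    (π : MarkovCoupling MX MY) :
    0 ≤ ∑' t, pGeom δ t * ∑ z : X × Y, C z * π.law t z :=
  tsum_nonneg fun t => mul_nonneg (pGeom_nonneg h0 h1 t)
    (Finset.sum_nonneg fun z _ => mul_nonneg (hC z) (law_nonneg π t z))

lemma dOTM_le_dOTC (hMX : IsStationaryMC MX) (hMY : IsStationaryMC MY)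
    {C : X × Y → ℝ} (hC : ∀ z, 0 ≤ C z) {δ : ℝ} (hδ0 : 0 < δ) (hδ1 : δ < 1) :
    dOTM (pGeom δ) MX MY C ≤ dOTC MX MY C := by
  have : Nonempty {π : MarkovCoupling MX MY // IsTimeHomogeneous π ∧ HasStationaryInit π} :=
    nonempty_adm hMX hMY
  refine le_ciInf fun π => ?_
  have hlaw : ∀ t, π.1.law t = π.1.init := by
    intro t
    induction t with
    | zero => rfl
    | succ t ih =>
      funext z
      have h1 : π.1.law (t+1) z = ∑ w : X × Y, π.1.trans t w z * π.1.law t w := rfl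
      rw [h1, ih, π.2.1 t]
      exact π.2.2 z
  have hval : (∑' t, pGeom δ t * ∑ z : X × Y, C z * π.1.law t z)
      = ∑ z : X × Y, C z * π.1.init z := by
    simp_rw [hlaw]
    rw [tsum_mul_right, tsum_pGeom hδ0 hδ1, one_mul]
  calc dOTM (pGeom δ) MX MY C
      ≤ ∑' t, pGeom δ t * ∑ z : X × Y, C z * π.1.law t z := by
        refine ciInf_le ⟨0, ?_⟩ π.1
        rintro v ⟨π', rfl⟩
        exact otm_cost_nonneg hC hδ0 hδ1.le π'
    _ = ∑ z : X × Y, C z * π.1.init z := hval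

end Main

section Construct
variable {X Y : Type*} [Fintype X] [Fintype Y] {MX : MarkovChain X} {MY : MarkovChain Y}

lemma exists_pair (hMX : IsStationaryMC MX) (hMY : IsStationaryMC MY) (C : X × Y → ℝ)
    {δ : ℝ} (hδ0 : 0 < δ) (hδ2 : δ ≤ 1/2) (π : MarkovCoupling MX MY) :
    ∃ (κ : X × Y → ℝ) (m : X × Y → X × Y → ℝ),
      IsCoupling κ MX.init MY.init ∧
      (∀ z, IsCoupling (m z) (MX.kernel z.1) (MY.kernel z.2)) ∧
      (∀ z', |∑ z, m z z' * κ z - κ z'| ≤ 2 * δ) ∧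
      (∑ z, C z * κ z = ∑' t, pGeom δ t * ∑ z : X × Y, C z * π.law t z) := by
  classical
  have hδ1 : δ < 1 := by linarith
  have hp0 : ∀ t, 0 ≤ pGeom δ t := pGeom_nonneg hδ0 hδ1.le
  have hpS : Summable (pGeom δ) := summable_pGeom hδ0 hδ1
  have hpsum : ∑' t, pGeom δ t = 1 := tsum_pGeom hδ0 hδ1
  have hcomp : ∀ {f : ℕ → ℝ}, (∀ t, 0 ≤ f t) → (∀ t, f t ≤ pGeom δ t) → Summable f :=
    fun h0 hle => Summable.of_nonneg_of_le h0 hle hpS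
  have hL0 : ∀ t z, 0 ≤ π.law t z := law_nonneg π
  have hL1 : ∀ t z, π.law t z ≤ 1 := law_le_one hMX π
  have hT0 : ∀ t z z', 0 ≤ π.trans t z z' := fun t z => (π.trans_coupling t z).1
  have hT1 : ∀ t z z', π.trans t z z' ≤ 1 := trans_le_one π
  set κ : X × Y → ℝ := fun z => ∑' t, pGeom δ t * π.law t z with hκdef
  set lam : X × Y → X × Y → ℝ :=
    fun z z' => ∑' t, pGeom δ t * π.law t z * π.trans t z z' with hlamdef
  set m : X × Y → X × Y → ℝ := fun z z' =>
    if κ z = 0 then MX.kernel z.1 z'.1 * MY.kernel z.2 z'.2 else lam z z' / κ z with hmdef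
  -- summability
  have hSκ : ∀ z, Summable (fun t => pGeom δ t * π.law t z) := fun z =>
    hcomp (fun t => mul_nonneg (hp0 t) (hL0 t z))
      (fun t => mul_le_of_le_one_right (hp0 t) (hL1 t z))
  have hSlam : ∀ z z', Summable (fun t => pGeom δ t * π.law t z * π.trans t z z') := by
    intro z z'
    refine hcomp (fun t => mul_nonneg (mul_nonneg (hp0 t) (hL0 t z)) (hT0 t z z')) (fun t => ?_)
    calc pGeom δ t * π.law t z * π.trans t z z'
        ≤ pGeom δ t * π.law t z :=
          mul_le_of_le_one_right (mul_nonneg (hp0 t) (hL0 t z)) (hT1 t z z')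
      _ ≤ pGeom δ t := mul_le_of_le_one_right (hp0 t) (hL1 t z)
  -- κ facts
  have hκ0 : ∀ z, 0 ≤ κ z := fun z =>
    tsum_nonneg fun t => mul_nonneg (hp0 t) (hL0 t z)
  have hκ1 : ∀ z, κ z ≤ 1 := by
    intro z
    calc κ z ≤ ∑' t, pGeom δ t :=
        Summable.tsum_le_tsum (fun t => mul_le_of_le_one_right (hp0 t) (hL1 t z)) (hSκ z) hpS
      _ = 1 := hpsum
  have hκmX : ∀ x, ∑ y, κ (x, y) = MX.init x := by
    intro x
    simp only [hκdef]
    rw [← Summable.tsum_finsetSum (fun y _ => hSκ (x, y))]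
    have h : ∀ t, (∑ y, pGeom δ t * π.law t (x, y)) = pGeom δ t * MX.init x := fun t => by
      rw [← Finset.mul_sum, law_margX hMX π t x]
    rw [tsum_congr h, tsum_mul_right, hpsum, one_mul]
  have hκmY : ∀ y, ∑ x, κ (x, y) = MY.init y := by
    intro y
    simp only [hκdef]
    rw [← Summable.tsum_finsetSum (fun x _ => hSκ (x, y))]
    have h : ∀ t, (∑ x, pGeom δ t * π.law t (x, y)) = pGeom δ t * MY.init y := fun t => by
      rw [← Finset.mul_sum, law_margY hMY π t y]
    rw [tsum_congr h, tsum_mul_right, hpsum, one_mul]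
  -- lam facts
  have hlam0 : ∀ z z', 0 ≤ lam z z' := fun z z' =>
    tsum_nonneg fun t => mul_nonneg (mul_nonneg (hp0 t) (hL0 t z)) (hT0 t z z')
  have hlamle : ∀ z z', lam z z' ≤ κ z := fun z z' =>
    Summable.tsum_le_tsum
      (fun t => mul_le_of_le_one_right (mul_nonneg (hp0 t) (hL0 t z)) (hT1 t z z'))
      (hSlam z z') (hSκ z)
  have hlammX : ∀ z x', ∑ y', lam z (x', y') = κ z * MX.kernel z.1 x' := by
    intro z x'
    simp only [hlamdef, hκdef]
    rw [← Summable.tsum_finsetSum (fun y' _ => hSlam z (x', y'))]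
    have h : ∀ t, (∑ y', pGeom δ t * π.law t z * π.trans t z (x', y'))
        = (pGeom δ t * π.law t z) * MX.kernel z.1 x' := fun t => by
      rw [← Finset.mul_sum, (π.trans_coupling t z).2.1 x']
    rw [tsum_congr h, tsum_mul_right]
  have hlammY : ∀ z y', ∑ x', lam z (x', y') = κ z * MY.kernel z.2 y' := by
    intro z y'
    simp only [hlamdef, hκdef]
    rw [← Summable.tsum_finsetSum (fun x' _ => hSlam z (x', y'))]
    have h : ∀ t, (∑ x', pGeom δ t * π.law t z * π.trans t z (x', y'))
        = (pGeom δ t * π.law t z) * MY.kernel z.2 y' := fun t => by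
      rw [← Finset.mul_sum, (π.trans_coupling t z).2.2 y']
    rw [tsum_congr h, tsum_mul_right]
  -- m * κ = lam
  have hmκ : ∀ z z', m z z' * κ z = lam z z' := by
    intro z z'
    simp only [hmdef]
    by_cases h : κ z = 0
    · rw [if_pos h, h, mul_zero]
      have : lam z z' ≤ 0 := h ▸ hlamle z z'
      linarith [hlam0 z z']
    · rw [if_neg h, div_mul_cancel₀ _ h]
  -- m coupling
  have hmcoup : ∀ z, IsCoupling (m z) (MX.kernel z.1) (MY.kernel z.2) := by
    intro z
    by_cases h : κ z = 0
    · have : m z = fun z' : X × Y => MX.kernel z.1 z'.1 * MY.kernel z.2 z'.2 := by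
        funext z'; simp only [hmdef, if_pos h]
      rw [this]
      exact isCoupling_prod (MX.kernel_prob z.1) (MY.kernel_prob z.2)
    · have hmz : ∀ z', m z z' = lam z z' / κ z := fun z' => by
        simp only [hmdef, if_neg h]
      refine ⟨fun z' => ?_, fun x' => ?_, fun y' => ?_⟩
      · rw [hmz]; exact div_nonneg (hlam0 z z') (hκ0 z)
      · simp_rw [hmz]
        rw [← Finset.sum_div, hlammX z x', mul_comm, mul_div_assoc, div_self h, mul_one]
      · simp_rw [hmz]
        rw [← Finset.sum_div, hlammY z y', mul_comm, mul_div_assoc, div_self h, mul_one]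
  -- stationarity error
  have hstat : ∀ z', |∑ z, m z z' * κ z - κ z'| ≤ 2 * δ := by
    intro z'
    have hS : Summable (fun t => pGeom δ t * π.law (t+1) z') :=
      hcomp (fun t => mul_nonneg (hp0 t) (hL0 (t+1) z'))
        (fun t => mul_le_of_le_one_right (hp0 t) (hL1 (t+1) z'))
    set S : ℝ := ∑' t, pGeom δ t * π.law (t+1) z' with hSdef
    have hsum_lam : ∑ z, m z z' * κ z = S := by
      simp_rw [hmκ]
      simp only [hlamdef, hSdef]
      rw [← Summable.tsum_finsetSum (fun z _ => hSlam z z')]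
      refine tsum_congr fun t => ?_
      rw [law_succ π t z', Finset.mul_sum]
      exact Finset.sum_congr rfl fun z _ => by ring
    have hshift : (1 - δ) * S = κ z' - δ * π.init z' := by
      have h1 : κ z' = δ * π.init z' + (1 - δ) * S := by
        simp only [hκdef, hSdef]
        rw [Summable.tsum_eq_zero_add (hSκ z')]
        congr 1
        · show pGeom δ 0 * π.law 0 z' = δ * π.init z'
          simp [pGeom, law_zero]
        · rw [← tsum_mul_left]
          refine tsum_congr fun t => ?_
          show pGeom δ (t+1) * π.law (t+1) z' = (1 - δ) * (pGeom δ t * π.law (t+1) z')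
          simp only [pGeom, pow_succ]
          ring
      linarith
    rw [hsum_lam]
    have hinit0 : 0 ≤ π.init z' := π.init_coupling.1 z'
    have hinit1 : π.init z' ≤ 1 := π.init_coupling.le_one MX.init_prob.2 z'
    have habs : |κ z' - π.init z'| ≤ 1 :=
      abs_sub_le_iff.2 ⟨by linarith [hκ1 z'], by linarith [hκ0 z']⟩
    have hkey : (1 - δ) * (S - κ z') = δ * (κ z' - π.init z') := by
      have : (1 - δ) * (S - κ z') = (1 - δ) * S - (1 - δ) * κ z' := by ring
      rw [this, hshift]; ring
    have h2 : |(1 - δ) * (S - κ z')| ≤ δ * 1 := by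
      rw [hkey, abs_mul, abs_of_pos hδ0]
      exact mul_le_mul_of_nonneg_left habs hδ0.le
    rw [abs_mul, abs_of_pos (by linarith : (0:ℝ) < 1 - δ)] at h2
    have h3 : (0:ℝ) ≤ |S - κ z'| := abs_nonneg _
    nlinarith
  -- cost
  have hcost : ∑ z, C z * κ z = ∑' t, pGeom δ t * ∑ z : X × Y, C z * π.law t z := by
    have hs : ∀ z : X × Y, Summable (fun t => C z * (pGeom δ t * π.law t z)) := fun z =>
      (hSκ z).mul_left (C z)
    calc ∑ z, C z * κ z
        = ∑ z : X × Y, ∑' t, C z * (pGeom δ t * π.law t z) := by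
          refine Finset.sum_congr rfl fun z _ => ?_
          simp only [hκdef]
          rw [tsum_mul_left]
      _ = ∑' t, ∑ z : X × Y, C z * (pGeom δ t * π.law t z) :=
          (Summable.tsum_finsetSum fun z _ => hs z).symm
      _ = ∑' t, pGeom δ t * ∑ z : X × Y, C z * π.law t z := by
          refine tsum_congr fun t => ?_
          rw [Finset.mul_sum]
          exact Finset.sum_congr rfl fun z _ => by ring
  exact ⟨κ, m, ⟨hκ0, hκmX, hκmY⟩, hmcoup, hstat, hcost⟩

end Construct

section Limit
variable {X Y : Type*} [Fintype X] [Fintype Y] {MX : MarkovChain X} {MY : MarkovChain Y}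

lemma dOTC_le_of_seq (hMX : IsStationaryMC MX) (hMY : IsStationaryMC MY)
    {C : X × Y → ℝ} (hC : ∀ z, 0 ≤ C z)
    {κs : ℕ → X × Y → ℝ} {ms : ℕ → X × Y → X × Y → ℝ} {es : ℕ → ℝ} {c : ℝ}
    (hκ : ∀ n, IsCoupling (κs n) MX.init MY.init)
    (hm : ∀ n z, IsCoupling (ms n z) (MX.kernel z.1) (MY.kernel z.2))
    (herr : ∀ n z', |∑ z, ms n z z' * κs n z - κs n z'| ≤ es n)
    (he : Tendsto es atTop (𝓝 0))
    (hcost : ∀ n, ∑ z, C z * κs n z ≤ c) :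
    dOTC MX MY C ≤ c := by
  classical
  let E := ((X × Y) → ℝ) × ((X × Y) → (X × Y) → ℝ)
  let K : Set E := (Set.univ.pi fun _ => Set.Icc (0:ℝ) 1) ×ˢ
      (Set.univ.pi fun _ => Set.univ.pi fun _ => Set.Icc (0:ℝ) 1)
  have hKc : IsCompact K := (isCompact_univ_pi fun _ => isCompact_Icc).prod
      (isCompact_univ_pi fun _ => isCompact_univ_pi fun _ => isCompact_Icc)
  have hmem : ∀ n, (⟨κs n, ms n⟩ : E) ∈ K := by
    intro n
    constructor
    · intro z _
      exact ⟨(hκ n).1 z, (hκ n).le_one MX.init_prob.2 z⟩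
    · intro z _ z' _
      exact ⟨(hm n z).1 z', (hm n z).le_one (MX.kernel_prob z.1).2 z'⟩
  obtain ⟨L, _, φ, hφ, hconv⟩ := hKc.tendsto_subseq hmem
  have hκt : ∀ z, Tendsto (fun n => κs (φ n) z) atTop (𝓝 (L.1 z)) := fun z =>
    (((continuous_apply z).comp continuous_fst).tendsto L).comp hconv
  have hmt : ∀ z z', Tendsto (fun n => ms (φ n) z z') atTop (𝓝 (L.2 z z')) := by
    intro z z'
    have hc : Continuous fun e : E => e.2 z z' :=
      (continuous_apply z').comp ((continuous_apply z).comp continuous_snd)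
    exact (hc.tendsto L).comp hconv
  have hκ0 : ∀ z, 0 ≤ L.1 z := fun z =>
    ge_of_tendsto' (hκt z) (fun n => (hκ (φ n)).1 z)
  have hκmX : ∀ x, ∑ y, L.1 (x, y) = MX.init x := by
    intro x
    have h1 : Tendsto (fun n => ∑ y, κs (φ n) (x, y)) atTop (𝓝 (∑ y, L.1 (x, y))) :=
      tendsto_finset_sum _ fun y _ => hκt (x, y)
    have h2 : (fun n => ∑ y, κs (φ n) (x, y)) = fun _ => MX.init x :=
      funext fun n => (hκ (φ n)).2.1 x
    rw [h2] at h1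
    exact tendsto_nhds_unique h1 tendsto_const_nhds |>.symm |>.symm
  have hκmY : ∀ y, ∑ x, L.1 (x, y) = MY.init y := by
    intro y
    have h1 : Tendsto (fun n => ∑ x, κs (φ n) (x, y)) atTop (𝓝 (∑ x, L.1 (x, y))) :=
      tendsto_finset_sum _ fun x _ => hκt (x, y)
    have h2 : (fun n => ∑ x, κs (φ n) (x, y)) = fun _ => MY.init y :=
      funext fun n => (hκ (φ n)).2.2 y
    rw [h2] at h1
    exact tendsto_nhds_unique h1 tendsto_const_nhds
  have hm0 : ∀ z z', 0 ≤ L.2 z z' := fun z z' =>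
    ge_of_tendsto' (hmt z z') (fun n => (hm (φ n) z).1 z')
  have hmmX : ∀ z x', ∑ y', L.2 z (x', y') = MX.kernel z.1 x' := by
    intro z x'
    have h1 : Tendsto (fun n => ∑ y', ms (φ n) z (x', y')) atTop
        (𝓝 (∑ y', L.2 z (x', y'))) :=
      tendsto_finset_sum _ fun y' _ => hmt z (x', y')
    have h2 : (fun n => ∑ y', ms (φ n) z (x', y')) = fun _ => MX.kernel z.1 x' :=
      funext fun n => (hm (φ n) z).2.1 x'
    rw [h2] at h1
    exact tendsto_nhds_unique h1 tendsto_const_nhds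
  have hmmY : ∀ z y', ∑ x', L.2 z (x', y') = MY.kernel z.2 y' := by
    intro z y'
    have h1 : Tendsto (fun n => ∑ x', ms (φ n) z (x', y')) atTop
        (𝓝 (∑ x', L.2 z (x', y'))) :=
      tendsto_finset_sum _ fun x' _ => hmt z (x', y')
    have h2 : (fun n => ∑ x', ms (φ n) z (x', y')) = fun _ => MY.kernel z.2 y' :=
      funext fun n => (hm (φ n) z).2.2 y'
    rw [h2] at h1
    exact tendsto_nhds_unique h1 tendsto_const_nhds
  have hstat : ∀ z', ∑ z, L.2 z z' * L.1 z = L.1 z' := by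
    intro z'
    have h1 : Tendsto (fun n => ∑ z, ms (φ n) z z' * κs (φ n) z - κs (φ n) z') atTop
        (𝓝 (∑ z, L.2 z z' * L.1 z - L.1 z')) :=
      ((tendsto_finset_sum _ fun z _ => (hmt z z').mul (hκt z)).sub (hκt z'))
    have h3 : Tendsto (fun n => es (φ n)) atTop (𝓝 0) := he.comp hφ.tendsto_atTop
    have h4 : |∑ z, L.2 z z' * L.1 z - L.1 z'| ≤ 0 :=
      le_of_tendsto_of_tendsto' h1.abs h3 fun n => herr (φ n) z'
    exact sub_eq_zero.mp (abs_nonpos_iff.mp h4)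
  have hcostlim : ∑ z, C z * L.1 z ≤ c := by
    refine le_of_tendsto' (tendsto_finset_sum _ fun z _ => (hκt z).const_mul (C z))
      fun n => ?_
    exact hcost (φ n)
  let πlim : MarkovCoupling MX MY :=
    { init := L.1
      trans := fun _ => L.2
      init_coupling := ⟨hκ0, hκmX, hκmY⟩
      trans_coupling := fun t z => ⟨hm0 z, hmmX z, hmmY z⟩ }
  have hadm : IsTimeHomogeneous πlim ∧ HasStationaryInit πlim := ⟨fun _ => rfl, hstat⟩
  calc dOTC MX MY C ≤ ∑ z, C z * πlim.init z := by
        unfold dOTC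
        refine ciInf_le ⟨0, ?_⟩
          (⟨πlim, hadm⟩ : {π : MarkovCoupling MX MY // IsTimeHomogeneous π ∧ HasStationaryInit π})
        rintro v ⟨π', rfl⟩
        exact Finset.sum_nonneg fun z _ => mul_nonneg (hC z) (π'.1.init_coupling.1 z)
    _ ≤ c := hcostlim

end Limit

/-- For stationary Markov chains, `d_OTC = lim_{δ→0⁺} d_WL^{δ,(∞)}`. -/
theorem stmt8 {X Y : Type*} [Fintype X] [Fintype Y]
    (MX : MarkovChain X) (MY : MarkovChain Y)
    (hMX : IsStationaryMC MX) (hMY : IsStationaryMC MY)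
    (C : X × Y → ℝ) (hC : ∀ z, 0 ≤ C z) :
    Tendsto (fun δ => dOTM (pGeom δ) MX MY C) (𝓝[>] (0 : ℝ))
      (𝓝 (dOTC MX MY C)) := by
  have hne : Nonempty {π : MarkovCoupling MX MY // IsTimeHomogeneous π ∧ HasStationaryInit π} :=
    nonempty_adm hMX hMY
  rw [tendsto_order]
  constructor
  · intro a ha
    by_contra hcon
    rw [Filter.not_eventually] at hcon
    have hfreq : ∃ᶠ δ in 𝓝[>] (0:ℝ),
        dOTM (pGeom δ) MX MY C ≤ a ∧ δ ∈ Set.Ioo (0:ℝ) (1/2) := by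
      refine (hcon.mono fun δ h => not_lt.mp h).and_eventually
        (Ioo_mem_nhdsGT_of_mem ?_)
      exact Set.left_mem_Ico.2 (by norm_num)
    obtain ⟨δs, hδs, hprop⟩ := exists_seq_forall_of_frequently hfreq
    have hδ0 : Tendsto δs atTop (𝓝 0) := hδs.mono_right nhdsWithin_le_nhds
    have hac : a < dOTC MX MY C := ha
    set c : ℝ := (a + dOTC MX MY C) / 2 with hc
    have hsel : ∀ n, ∃ (κ : X × Y → ℝ) (m : X × Y → X × Y → ℝ),
        IsCoupling κ MX.init MY.init ∧
        (∀ z, IsCoupling (m z) (MX.kernel z.1) (MY.kernel z.2)) ∧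
        (∀ z', |∑ z, m z z' * κ z - κ z'| ≤ 2 * δs n) ∧
        ∑ z, C z * κ z ≤ c := by
      intro n
      obtain ⟨hle, hmem⟩ := hprop n
      have hlt : dOTM (pGeom (δs n)) MX MY C < c := lt_of_le_of_lt hle (by rw [hc]; linarith)
      obtain ⟨π, hπ⟩ := exists_lt_of_ciInf_lt hlt
      obtain ⟨κ, m, h1, h2, h3, h4⟩ := exists_pair hMX hMY C hmem.1 hmem.2.le π
      exact ⟨κ, m, h1, h2, h3, by rw [h4]; exact hπ.le⟩
    choose κs ms h1 h2 h3 h4 using hsel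
    have hlim : Tendsto (fun n => 2 * δs n) atTop (𝓝 0) := by
      simpa using hδ0.const_mul 2
    have hfinal : dOTC MX MY C ≤ c := dOTC_le_of_seq hMX hMY hC h1 h2 h3 hlim h4
    rw [hc] at hfinal
    linarith
  · intro a ha
    filter_upwards [Ioo_mem_nhdsGT_of_mem (Set.left_mem_Ico.2 one_pos)] with δ hδ
    exact lt_of_le_of_lt (dOTM_le_dOTC hMX hMY hC hδ.1 hδ.2) ha
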